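/- The family of homogeneous modules of a good homogeneous relation (one satisfying the modular quotient property) is weakly partitive; in particular, if homogeneous modules A and B overlap then A∖B is a homogeneous module. -/
import Mathlib


/-- `H` is a homogeneous relation: for each `x`, the binary relation
`H x · ·` is an equivalence relation on the elements distinct from `x`. -/
def IsHomRel {X : Type*} (H : X → X → X → Prop) : Prop :=
  (∀ x y, y ≠ x → H x y y) ∧
  (∀ x y z, y ≠ x → z ≠ x → H x y z → H x z y) ∧
  (∀ x y z w, y ≠ x → z ≠ x → w ≠ x → H x y z → H x z w → H x y w)

/-- `M` is a homogeneous module of `H`. -/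
def IsModule {X : Type*} (H : X → X → X → Prop) (M : Set X) : Prop :=
  ∀ m ∈ M, ∀ m' ∈ M, ∀ x ∉ M, H x m m'

/-- Two sets overlap. -/
def Overlap {X : Type*} (A B : Set X) : Prop :=
  (A ∩ B).Nonempty ∧ (A \ B).Nonempty ∧ (B \ A).Nonempty

/-- `H` is good: it satisfies the modular quotient property. -/
def Good {X : Type*} (H : X → X → X → Prop) : Prop :=
  ∀ M : Set X, IsModule H M →
    ∀ x ∈ M, ∀ y ∈ M, ∀ s ∉ M, ∀ t ∉ M, (H x s t ↔ H y s t)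

theorem stmt_18 {X : Type*} [Fintype X] (H : X → X → X → Prop)
    (hH : IsHomRel H) (hgood : Good H) :
    IsModule H (Set.univ : Set X) ∧
    (∀ x : X, IsModule H {x}) ∧
    ∀ A B : Set X, IsModule H A → IsModule H B → Overlap A B →
      IsModule H (A ∪ B) ∧ IsModule H (A ∩ B) ∧ IsModule H (A \ B) := by
  obtain ⟨hrefl, hsymm, htrans⟩ := hH
  refine ⟨?_, ?_, ?_⟩
  · intro m hm m' hm' x hx
    exact absurd (Set.mem_univ x) hx
  · intro y m hm m' hm' x hx
    rw [Set.mem_singleton_iff] at hm hm'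
    subst hm; subst hm'
    exact hrefl x m' (fun h => hx (Set.mem_singleton_iff.mpr h.symm))
  · intro A B hA hB ⟨⟨c, hcA, hcB⟩, ⟨a, haA, haB⟩, ⟨b, hbB, hbA⟩⟩
    refine ⟨?_, ?_, ?_⟩
    · intro m hm m' hm' x hx
      have hxA : x ∉ A := fun h => hx (Or.inl h)
      have hxB : x ∉ B := fun h => hx (Or.inr h)
      have hmx : m ≠ x := fun h => hx (h ▸ hm)
      have hm'x : m' ≠ x := fun h => hx (h ▸ hm')
      have hcx : c ≠ x := fun h => hxA (h ▸ hcA)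
      rcases hm with hm | hm <;> rcases hm' with hm' | hm'
      · exact hA m hm m' hm' x hxA
      · exact htrans x m c m' hmx hcx hm'x (hA m hm c hcA x hxA) (hB c hcB m' hm' x hxB)
      · exact htrans x m c m' hmx hcx hm'x (hB m hm c hcB x hxB) (hA c hcA m' hm' x hxA)
      · exact hB m hm m' hm' x hxB
    · intro m hm m' hm' x hx
      by_cases hxA : x ∈ A
      · have hxB : x ∉ B := fun h => hx ⟨hxA, h⟩
        exact hB m hm.2 m' hm'.2 x hxB
      · exact hA m hm.1 m' hm'.1 x hxA
    · intro m hm m' hm' x hx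
      by_cases hxA : x ∈ A
      · have hxB : x ∈ B := by
          by_contra h
          exact hx ⟨hxA, h⟩
        have := (hgood B hB x hxB b hbB m hm.2 m' hm'.2).mpr
        exact this (hA m hm.1 m' hm'.1 b hbA)
      · exact hA m hm.1 m' hm'.1 x hxA
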